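/- Let T ⊂ ℝ^d be a convex set containing the origin, ξ a random vector, and assume that for each σ > 0 the maximizer r(σ) of r ↦ ω(r) − r²/(2σ) exists and is unique, where ω(r) = E[sup_{x ∈ T ∩ rB₂}⟨ξ,x⟩]. Then the map σ ↦ r(σ) is nondecreasing on (0,∞). -/

import Mathlib

open MeasureTheory Metric Set
open scoped ENNReal NNReal

noncomputable section

/-- If for every `σ > 0` the maximizer `r(σ)` of `r ↦ ω(r) − r²/(2σ)`
over `r ≥ 0` exists and is unique, then `σ ↦ r(σ)` is nondecreasing on `(0, ∞)`. -/
theorem statement1 {d : ℕ} {Ω : Type*} [MeasurableSpace Ω]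
    (P : Measure Ω) [IsProbabilityMeasure P]
    (ξ : Ω → EuclideanSpace ℝ (Fin d)) (hξ : Measurable ξ)
    (T : Set (EuclideanSpace ℝ (Fin d))) (hconv : Convex ℝ T)
    (h0 : (0 : EuclideanSpace ℝ (Fin d)) ∈ T)
    (w : ℝ → EReal)
    (hw : ∀ r : ℝ, w r =
      ((∫⁻ a, ENNReal.ofReal
          (⨆ x : ↥(T ∩ closedBall 0 r), (inner ℝ (ξ a) (x : EuclideanSpace ℝ (Fin d)) : ℝ)) ∂P
        : ℝ≥0∞) : EReal))
    (rr : ℝ → ℝ)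
    (hmax : ∀ σ : ℝ, 0 < σ → 0 ≤ rr σ ∧ ∀ r' : ℝ, 0 ≤ r' →
      w r' - ((r' ^ 2 / (2 * σ) : ℝ) : EReal) ≤ w (rr σ) - (((rr σ) ^ 2 / (2 * σ) : ℝ) : EReal))
    (huniq : ∀ σ : ℝ, 0 < σ → ∀ r : ℝ,
      (0 ≤ r ∧ ∀ r' : ℝ, 0 ≤ r' →
        w r' - ((r' ^ 2 / (2 * σ) : ℝ) : EReal) ≤ w r - ((r ^ 2 / (2 * σ) : ℝ) : EReal)) →
      r = rr σ) :
    ∀ σ τ : ℝ, 0 < σ → σ ≤ τ → rr σ ≤ rr τ := by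
  intro σ τ hσ hστ
  have hτ : 0 < τ := hσ.trans_le hστ
  rcases eq_or_lt_of_le hστ with rfl | hlt
  · exact le_refl _
  by_contra hcon
  push_neg at hcon
  -- names
  set r1 := rr σ with hr1
  set r2 := rr τ with hr2
  have hr1n : 0 ≤ r1 := (hmax σ hσ).1
  have hr2n : 0 ≤ r2 := (hmax τ hτ).1
  have hne : r2 ≠ r1 := ne_of_lt hcon
  have h1 : w r2 - ((r2 ^ 2 / (2 * σ) : ℝ) : EReal) ≤ w r1 - ((r1 ^ 2 / (2 * σ) : ℝ) : EReal) :=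
    (hmax σ hσ).2 r2 hr2n
  have h2 : w r1 - ((r1 ^ 2 / (2 * τ) : ℝ) : EReal) ≤ w r2 - ((r2 ^ 2 / (2 * τ) : ℝ) : EReal) :=
    (hmax τ hτ).2 r1 hr1n
  -- w values are not ⊥
  have hwb : ∀ r : ℝ, w r ≠ ⊥ := fun r => by rw [hw r]; exact EReal.coe_ennreal_ne_bot _
  -- w r1 ≠ ⊤
  by_cases ht1 : w r1 = ⊤
  · -- then w r2 = ⊤ as well (from h2), and r2 is also a maximizer at σ
    have ht2 : w r2 = ⊤ := by
      by_contra ht2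
      lift w r2 to ℝ using ⟨ht2, hwb r2⟩ with b hb
      rw [ht1, EReal.top_sub_coe] at h2
      rw [← EReal.coe_sub] at h2
      exact (EReal.coe_ne_top _) (top_le_iff.mp h2)
    have : r2 = r1 := by
      refine huniq σ hσ r2 ⟨hr2n, fun r' hr' => ?_⟩
      rw [ht2, EReal.top_sub_coe]
      exact le_top
    exact hne this
  -- w r2 ≠ ⊤
  have ht2 : w r2 ≠ ⊤ := by
    intro ht2
    rw [ht2, EReal.top_sub_coe] at h1
    lift w r1 to ℝ using ⟨ht1, hwb r1⟩ with a ha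
    rw [← EReal.coe_sub] at h1
    exact (EReal.coe_ne_top _) (top_le_iff.mp h1)
  -- strictness of h1
  have h1s : w r2 - ((r2 ^ 2 / (2 * σ) : ℝ) : EReal) < w r1 - ((r1 ^ 2 / (2 * σ) : ℝ) : EReal) := by
    rcases lt_or_eq_of_le h1 with h | h
    · exact h
    · exfalso
      apply hne
      refine huniq σ hσ r2 ⟨hr2n, fun r' hr' => ?_⟩
      rw [h]
      exact (hmax σ hσ).2 r' hr'
  -- now pass to reals
  lift w r1 to ℝ using ⟨ht1, hwb r1⟩ with a ha
  lift w r2 to ℝ using ⟨ht2, hwb r2⟩ with b hb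
  rw [← EReal.coe_sub, ← EReal.coe_sub, EReal.coe_lt_coe_iff] at h1s
  rw [← EReal.coe_sub, ← EReal.coe_sub, EReal.coe_le_coe_iff] at h2
  have hsq : r2 ^ 2 < r1 ^ 2 := by nlinarith
  have hcomb : (r1 ^ 2 - r2 ^ 2) / (2 * σ) < (r1 ^ 2 - r2 ^ 2) / (2 * τ) := by
    rw [sub_div, sub_div]; linarith
  rw [div_lt_div_iff₀ (by linarith) (by linarith)] at hcomb
  nlinarith
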